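/- Let p ≥ 2 and n ≥ 1 be integers and let G be the abelian group generated by five elements μ_{a₁}, μ_{a₂}, μ_b, μ_c, μ_d subject to the relations n·μ_{a₁} + μ_{a₂} = 0, -p·μ_{a₂} + μ_{a₁} + μ_d = 0, p·μ_b + μ_d = 0, (-p(n+1)-1)·μ_c + μ_d = 0, and μ_{a₂} + μ_b + μ_c + μ_d = 0. Then G is cyclic, generated by μ_d, of order h_S = p(pn+1)(p(n+1)+2) - p(n+1) - 1, and moreover μ_{a₁} = (n(n+1)p² + 2np - 1 - n)·μ_d, μ_{a₂} = -n·μ_{a₁}, μ_b = ((-n²-n)p² + (-1-3n)p - 1 + n)·μ_d, and μ_c = ((n²+2n+1)np² + p(2n²+3n+1) - (n+2)n)·μ_d in G. -/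

import Mathlib

/-- The relation vectors presenting `H₁(S_{p,n}; ℤ)` in the generators
`(μ_{a₁}, μ_{a₂}, μ_b, μ_c, μ_d)`. -/
def relVecs (p n : ℤ) : Set (Fin 5 → ℤ) :=
  { ![n, 1, 0, 0, 0], ![1, -p, 0, 0, 1], ![0, 0, p, 0, 1],
    ![0, 0, 0, -(p * (n + 1)) - 1, 1], ![0, 1, 1, 1, 1] }

/-- The abelian group presented by the five generators and five relations. -/
def PresGroup (p n : ℤ) :=
  (Fin 5 → ℤ) ⧸ Submodule.span ℤ (relVecs p n)

instance (p n : ℤ) : AddCommGroup (PresGroup p n) :=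
  Submodule.Quotient.addCommGroup _

/-- The images of the five generators in the presented group. -/
def μ (p n : ℤ) (i : Fin 5) : PresGroup p n :=
  Submodule.Quotient.mk (Pi.single i 1)

lemma comb_mem (p n c1 c2 c3 c4 c5 : ℤ) :
    c1 • (![n, 1, 0, 0, 0] : Fin 5 → ℤ) + c2 • ![1, -p, 0, 0, 1] + c3 • ![0, 0, p, 0, 1]
      + c4 • ![0, 0, 0, -(p * (n + 1)) - 1, 1] + c5 • ![0, 1, 1, 1, 1]
      ∈ Submodule.span ℤ (relVecs p n) := by
  have h1 : (![n, 1, 0, 0, 0] : Fin 5 → ℤ) ∈ relVecs p n := by simp [relVecs]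
  have h2 : (![1, -p, 0, 0, 1] : Fin 5 → ℤ) ∈ relVecs p n := by simp [relVecs]
  have h3 : (![0, 0, p, 0, 1] : Fin 5 → ℤ) ∈ relVecs p n := by simp [relVecs]
  have h4 : (![0, 0, 0, -(p * (n + 1)) - 1, 1] : Fin 5 → ℤ) ∈ relVecs p n := by
    simp [relVecs]
  have h5 : (![0, 1, 1, 1, 1] : Fin 5 → ℤ) ∈ relVecs p n := by simp [relVecs]
  exact Submodule.add_mem _ (Submodule.add_mem _ (Submodule.add_mem _ (Submodule.add_mem _
    (Submodule.smul_mem _ _ (Submodule.subset_span h1))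
    (Submodule.smul_mem _ _ (Submodule.subset_span h2)))
    (Submodule.smul_mem _ _ (Submodule.subset_span h3)))
    (Submodule.smul_mem _ _ (Submodule.subset_span h4)))
    (Submodule.smul_mem _ _ (Submodule.subset_span h5))

lemma mem_span_of_comb (p n c1 c2 c3 c4 c5 : ℤ) (v : Fin 5 → ℤ)
    (h0 : v 0 = c1 * n + c2)
    (h1 : v 1 = c1 - c2 * p + c5)
    (h2 : v 2 = c3 * p + c5)
    (h3 : v 3 = c4 * (-(p * (n + 1)) - 1) + c5)
    (h4 : v 4 = c2 + c3 + c4 + c5) :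
    v ∈ Submodule.span ℤ (relVecs p n) := by
  have hv : v = c1 • (![n, 1, 0, 0, 0] : Fin 5 → ℤ) + c2 • ![1, -p, 0, 0, 1]
      + c3 • ![0, 0, p, 0, 1] + c4 • ![0, 0, 0, -(p * (n + 1)) - 1, 1]
      + c5 • ![0, 1, 1, 1, 1] := by
    funext j
    fin_cases j <;> simp [h0, h1, h2, h3, h4] <;> ring
  rw [hv]
  exact comb_mem p n c1 c2 c3 c4 c5

def fmap (N : ℕ) (c : Fin 5 → ℤ) : (Fin 5 → ℤ) →ₗ[ℤ] ZMod N where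
  toFun v := ((∑ i, v i * c i : ℤ) : ZMod N)
  map_add' v w := by push_cast [Pi.add_apply, add_mul, Finset.sum_add_distrib]; ring
  map_smul' z v := by
    simp only [Pi.smul_apply, smul_eq_mul, RingHom.id_apply, zsmul_eq_mul]
    push_cast [Finset.mul_sum, mul_assoc]
    ring

lemma fmap_apply (N : ℕ) (c : Fin 5 → ℤ) (v : Fin 5 → ℤ) :
    fmap N c v = ((∑ i, v i * c i : ℤ) : ZMod N) := rfl

theorem homology_presentation (p n : ℤ) (hp : 2 ≤ p) (hn : 1 ≤ n) :
    (∀ x : PresGroup p n, ∃ k : ℤ, x = k • μ p n 4) ∧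
      Nat.card (PresGroup p n) =
        (p * (p * n + 1) * (p * (n + 1) + 2) - p * (n + 1) - 1).toNat ∧
      μ p n 0 = (n * (n + 1) * p ^ 2 + 2 * n * p - 1 - n) • μ p n 4 ∧
      μ p n 1 = (-n) • μ p n 0 ∧
      μ p n 2 = ((-n ^ 2 - n) * p ^ 2 + (-1 - 3 * n) * p - 1 + n) • μ p n 4 ∧
      μ p n 3 =
        ((n ^ 2 + 2 * n + 1) * n * p ^ 2 + p * (2 * n ^ 2 + 3 * n + 1) - (n + 2) * n) •
          μ p n 4 := by
  set S := Submodule.span ℤ (relVecs p n) with hS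
  -- smul on the quotient
  have mk_smul : ∀ (k : ℤ) (v : Fin 5 → ℤ),
      (Submodule.Quotient.mk (k • v) : PresGroup p n) = k • Submodule.Quotient.mk v :=
    fun k v => map_zsmul (S.mkQ.toAddMonoidHom) k v
  have mk_eq : ∀ (v w : Fin 5 → ℤ),
      (Submodule.Quotient.mk v : PresGroup p n) = Submodule.Quotient.mk w ↔ v - w ∈ S :=
    fun v w => Submodule.Quotient.eq S
  have smul_single : ∀ (k : ℤ) (i : Fin 5),
      k • (Pi.single i 1 : Fin 5 → ℤ) = Pi.single i k := by
    intro k i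
    funext j
    by_cases hj : j = i <;> simp [hj, Pi.single_apply]
  have key : ∀ (k : ℤ) (i : Fin 5), (Pi.single i 1 - Pi.single 4 k : Fin 5 → ℤ) ∈ S →
      μ p n i = k • μ p n 4 := by
    intro k i hmem
    exact ((mk_eq (Pi.single i 1) (k • Pi.single 4 1)).mpr (by rwa [smul_single])).trans
      (mk_smul k (Pi.single 4 1))
  -- the four generator identities
  have single_sub : ∀ (i : Fin 5) (k : ℤ) (j : Fin 5),
      (Pi.single i 1 - Pi.single 4 k : Fin 5 → ℤ) j
        = (if j = i then 1 else 0) - (if j = (4 : Fin 5) then k else 0) := by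
    intro i k j
    simp [Pi.single_apply]
  have t0 : μ p n 0 = (n * (n + 1) * p ^ 2 + 2 * n * p - 1 - n) • μ p n 4 := by
    apply key
    apply mem_span_of_comb p n (p + p * n) (1 - p * n - p * n ^ 2)
      (n + p * n + p * n ^ 2) (-(p * n)) (-(p * n) - p ^ 2 * n - p ^ 2 * n ^ 2) <;>
      simp [Pi.single_apply] <;> ring
  have t1 : μ p n 1 = (-(n * (n * (n + 1) * p ^ 2 + 2 * n * p - 1 - n))) • μ p n 4 := by
    apply key
    apply mem_span_of_comb p n (1 - p * n - p * n ^ 2) (-n + p * n ^ 2 + p * n ^ 3)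
      (-n ^ 2 - p * n ^ 2 - p * n ^ 3) (p * n ^ 2)
      (p * n ^ 2 + p ^ 2 * n ^ 2 + p ^ 2 * n ^ 3) <;>
      simp [Pi.single_apply] <;> ring
  have t2 : μ p n 2 = ((-n ^ 2 - n) * p ^ 2 + (-1 - 3 * n) * p - 1 + n) • μ p n 4 := by
    apply key
    apply mem_span_of_comb p n (-1 - p - p * n) (n + p * n + p * n ^ 2)
      (-1 - 2 * n - p * n - p * n ^ 2) (1 + p * n)
      (1 + p + 2 * p * n + p ^ 2 * n + p ^ 2 * n ^ 2) <;>
      simp [Pi.single_apply] <;> ring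
  have t3 : μ p n 3 = ((n ^ 2 + 2 * n + 1) * n * p ^ 2 + p * (2 * n ^ 2 + 3 * n + 1) - (n + 2) * n) • μ p n 4 := by
    apply key
    apply mem_span_of_comb p n (p + 2 * p * n + p * n ^ 2)
      (-(p * n) - 2 * p * n ^ 2 - p * n ^ 3)
      (1 + 2 * n + n ^ 2 + p * n + 2 * p * n ^ 2 + p * n ^ 3)
      (-1 - p * n - p * n ^ 2)
      (-p - 2 * p * n - p * n ^ 2 - p ^ 2 * n - 2 * p ^ 2 * n ^ 2 - p ^ 2 * n ^ 3) <;>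
      simp [Pi.single_apply] <;> ring
  have t4 : ((p * (p * n + 1) * (p * (n + 1) + 2) - p * (n + 1) - 1) • Pi.single (4 : Fin 5) 1 : Fin 5 → ℤ) ∈ S := by
    rw [smul_single]
    apply mem_span_of_comb p n (-p - p ^ 2 - p ^ 2 * n) (p * n + p ^ 2 * n + p ^ 2 * n ^ 2)
      (-1 - p - 2 * p * n - p ^ 2 * n - p ^ 2 * n ^ 2) (p + p ^ 2 * n)
      (p + p ^ 2 + 2 * p ^ 2 * n + p ^ 3 * n + p ^ 3 * n ^ 2) <;>
      simp [Pi.single_apply] <;> ring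
  -- μ 1 = -n • μ 0
  have t1' : μ p n 1 = (-n) • μ p n 0 := by
    rw [t0, t1, smul_smul]
    ring_nf
  -- every element is a multiple of μ 4
  have gen : ∀ v : Fin 5 → ℤ, (Submodule.Quotient.mk v : PresGroup p n)
      = (v 0 * (n * (n + 1) * p ^ 2 + 2 * n * p - 1 - n) + v 1 * (-(n * (n * (n + 1) * p ^ 2 + 2 * n * p - 1 - n))) + v 2 * ((-n ^ 2 - n) * p ^ 2 + (-1 - 3 * n) * p - 1 + n) + v 3 * ((n ^ 2 + 2 * n + 1) * n * p ^ 2 + p * (2 * n ^ 2 + 3 * n + 1) - (n + 2) * n) + v 4) • μ p n 4 := by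
    intro v
    refine ((mk_eq _ _).mpr ?_).trans (mk_smul _ (Pi.single 4 1))
    rw [smul_single]
    apply mem_span_of_comb p n
      (v 0 * (p + p * n) + v 1 * (1 - p * n - p * n ^ 2) + v 2 * (-1 - p - p * n)
        + v 3 * (p + 2 * p * n + p * n ^ 2))
      (v 0 * (1 - p * n - p * n ^ 2) + v 1 * (-n + p * n ^ 2 + p * n ^ 3)
        + v 2 * (n + p * n + p * n ^ 2) + v 3 * (-(p * n) - 2 * p * n ^ 2 - p * n ^ 3))
      (v 0 * (n + p * n + p * n ^ 2) + v 1 * (-n ^ 2 - p * n ^ 2 - p * n ^ 3)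
        + v 2 * (-1 - 2 * n - p * n - p * n ^ 2)
        + v 3 * (1 + 2 * n + n ^ 2 + p * n + 2 * p * n ^ 2 + p * n ^ 3))
      (v 0 * (-(p * n)) + v 1 * (p * n ^ 2) + v 2 * (1 + p * n)
        + v 3 * (-1 - p * n - p * n ^ 2))
      (v 0 * (-(p * n) - p ^ 2 * n - p ^ 2 * n ^ 2)
        + v 1 * (p * n ^ 2 + p ^ 2 * n ^ 2 + p ^ 2 * n ^ 3)
        + v 2 * (1 + p + 2 * p * n + p ^ 2 * n + p ^ 2 * n ^ 2)
        + v 3 * (-p - 2 * p * n - p * n ^ 2 - p ^ 2 * n - 2 * p ^ 2 * n ^ 2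
            - p ^ 2 * n ^ 3)) <;>
      simp [Pi.single_apply] <;> ring
  have part1 : ∀ x : PresGroup p n, ∃ k : ℤ, x = k • μ p n 4 := by
    intro x
    obtain ⟨v, rfl⟩ := Submodule.Quotient.mk_surjective S x
    exact ⟨_, gen v⟩
  -- cardinality
  have hn0 : (0:ℤ) ≤ n := by linarith
  have hw2 : (0:ℤ) ≤ p ^ 3 * (n * (n + 1)) :=
    mul_nonneg (pow_nonneg (by linarith) 3) (mul_nonneg hn0 (by linarith))
  have hw3 : (0:ℤ) ≤ (p ^ 2 - p) * (n + 1) :=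
    mul_nonneg (by nlinarith) (by linarith)
  have hw4 : (0:ℤ) ≤ p ^ 2 * n := mul_nonneg (by positivity) hn0
  have hpos : 0 < (p * (p * n + 1) * (p * (n + 1) + 2) - p * (n + 1) - 1) := by
    nlinarith [hw2, hw3, hw4]
  set N : ℕ := (p * (p * n + 1) * (p * (n + 1) + 2) - p * (n + 1) - 1).toNat with hNdef
  have hN : (N : ℤ) = (p * (p * n + 1) * (p * (n + 1) + 2) - p * (n + 1) - 1) := Int.toNat_of_nonneg hpos.le
  have hcast : (((p * (p * n + 1) * (p * (n + 1) + 2) - p * (n + 1) - 1) : ℤ) : ZMod N) = 0 := by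
    rw [← hN]
    exact_mod_cast ZMod.natCast_self N
  set c : Fin 5 → ℤ := ![(n * (n + 1) * p ^ 2 + 2 * n * p - 1 - n), -(n * (n * (n + 1) * p ^ 2 + 2 * n * p - 1 - n)), ((-n ^ 2 - n) * p ^ 2 + (-1 - 3 * n) * p - 1 + n), ((n ^ 2 + 2 * n + 1) * n * p ^ 2 + p * (2 * n ^ 2 + 3 * n + 1) - (n + 2) * n), 1] with hc
  have hker : S ≤ LinearMap.ker (fmap N c) := by
    rw [hS, Submodule.span_le]
    intro r hr
    simp only [relVecs, Set.mem_insert_iff, Set.mem_singleton_iff] at hr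
    have ev := fmap_apply N c
    rcases hr with rfl | rfl | rfl | rfl | rfl <;>
      simp only [SetLike.mem_coe, LinearMap.mem_ker, ev, Fin.sum_univ_five] <;>
      rw [hc] <;> simp only [Matrix.cons_val_zero, Matrix.cons_val_one,
        Matrix.cons_val_two, Matrix.cons_val_three, Matrix.cons_val_four,
        Matrix.head_cons, Matrix.tail_cons]
    · rw [show n * (n * (n + 1) * p ^ 2 + 2 * n * p - 1 - n) + 1 * -(n * (n * (n + 1) * p ^ 2 + 2 * n * p - 1 - n)) + 0 * ((-n ^ 2 - n) * p ^ 2 + (-1 - 3 * n) * p - 1 + n) + 0 * ((n ^ 2 + 2 * n + 1) * n * p ^ 2 + p * (2 * n ^ 2 + 3 * n + 1) - (n + 2) * n) + 0 * 1 = (0 : ℤ) by ring]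
      norm_num
    · rw [show 1 * (n * (n + 1) * p ^ 2 + 2 * n * p - 1 - n) + -p * -(n * (n * (n + 1) * p ^ 2 + 2 * n * p - 1 - n)) + 0 * ((-n ^ 2 - n) * p ^ 2 + (-1 - 3 * n) * p - 1 + n) + 0 * ((n ^ 2 + 2 * n + 1) * n * p ^ 2 + p * (2 * n ^ 2 + 3 * n + 1) - (n + 2) * n) + 1 * 1 = n * (p * (p * n + 1) * (p * (n + 1) + 2) - p * (n + 1) - 1) by ring]
      rw [Int.cast_mul, hcast, mul_zero]
    · rw [show 0 * (n * (n + 1) * p ^ 2 + 2 * n * p - 1 - n) + 0 * -(n * (n * (n + 1) * p ^ 2 + 2 * n * p - 1 - n)) + p * ((-n ^ 2 - n) * p ^ 2 + (-1 - 3 * n) * p - 1 + n) + 0 * ((n ^ 2 + 2 * n + 1) * n * p ^ 2 + p * (2 * n ^ 2 + 3 * n + 1) - (n + 2) * n) + 1 * 1 = (-1) * (p * (p * n + 1) * (p * (n + 1) + 2) - p * (n + 1) - 1) by ring]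
      rw [Int.cast_mul, hcast, mul_zero]
    · rw [show 0 * (n * (n + 1) * p ^ 2 + 2 * n * p - 1 - n) + 0 * -(n * (n * (n + 1) * p ^ 2 + 2 * n * p - 1 - n)) + 0 * ((-n ^ 2 - n) * p ^ 2 + (-1 - 3 * n) * p - 1 + n) + (-(p * (n + 1)) - 1) * ((n ^ 2 + 2 * n + 1) * n * p ^ 2 + p * (2 * n ^ 2 + 3 * n + 1) - (n + 2) * n) + 1 * 1
          = (-(n + 1) ^ 2) * (p * (p * n + 1) * (p * (n + 1) + 2) - p * (n + 1) - 1) by ring]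
      rw [Int.cast_mul, hcast, mul_zero]
    · rw [show 0 * (n * (n + 1) * p ^ 2 + 2 * n * p - 1 - n) + 1 * -(n * (n * (n + 1) * p ^ 2 + 2 * n * p - 1 - n)) + 1 * ((-n ^ 2 - n) * p ^ 2 + (-1 - 3 * n) * p - 1 + n) + 1 * ((n ^ 2 + 2 * n + 1) * n * p ^ 2 + p * (2 * n ^ 2 + 3 * n + 1) - (n + 2) * n) + 1 * 1 = (0 : ℤ) by ring]
      norm_num
  let φ : PresGroup p n →ₗ[ℤ] ZMod N := Submodule.liftQ S (fmap N c) hker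
  have hφmk : ∀ v : Fin 5 → ℤ, φ (Submodule.Quotient.mk v) = fmap N c v := fun v => rfl
  have hφμ4 : φ (μ p n 4) = 1 := by
    have h2 : μ p n 4 = Submodule.Quotient.mk (Pi.single (4 : Fin 5) (1 : ℤ)) := rfl
    rw [h2, hφmk, fmap_apply, Fin.sum_univ_five]
    simp [Pi.single_apply, hc]
  have hμ4N : (zmultiplesHom (PresGroup p n) (μ p n 4)) ((N : ℤ)) = 0 := by
    simp only [zmultiplesHom_apply]
    rw [hN]
    rw [show (p * (p * n + 1) * (p * (n + 1) + 2) - p * (n + 1) - 1) • μ p n 4 = Submodule.Quotient.mk ((p * (p * n + 1) * (p * (n + 1) + 2) - p * (n + 1) - 1) • Pi.single (4 : Fin 5) (1 : ℤ)) from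
      (mk_smul _ _).symm]
    exact (Submodule.Quotient.mk_eq_zero S).mpr t4
  let ψ : ZMod N →+ PresGroup p n :=
    ZMod.lift N ⟨zmultiplesHom (PresGroup p n) (μ p n 4), hμ4N⟩
  have hψ : ∀ k : ℤ, ψ ((k : ZMod N)) = k • μ p n 4 := by
    intro k
    rw [show ψ ((k : ZMod N)) = (zmultiplesHom (PresGroup p n) (μ p n 4)) k from
      ZMod.lift_coe N _ k]
    simp
  have retract : ∀ z : ZMod N, φ (ψ z) = z := by
    intro z
    obtain ⟨k, rfl⟩ := ZMod.intCast_surjective z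
    rw [hψ, map_zsmul, hφμ4]
    simp
  have hbij : Function.Bijective ψ := by
    constructor
    · intro a b hab
      have := congrArg φ hab
      rwa [retract, retract] at this
    · intro x
      obtain ⟨k, rfl⟩ := part1 x
      exact ⟨(k : ZMod N), hψ k⟩
  have hcard : Nat.card (PresGroup p n) = N := by
    rw [← Nat.card_zmod N]
    exact (Nat.card_eq_of_bijective ψ hbij).symm
  refine ⟨part1, hcard, t0, t1', t2, t3⟩
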